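/- The ROBF map F is a standard function on the nonnegative orthant: (a) Positivity: for every μ with nonnegative entries, all entries of F(μ) are strictly positive; (b) Monotonicity: if μ ≤ μ' entrywise, then F(μ) ≤ F(μ') entrywise; (c) Scalability: for every β > 1 and every μ with nonnegative entries, F(βμ) < β·F(μ) entrywise (strict inequality in every coordinate). -/

import Mathlib

open Finset

private lemma p_mono {x y : ℝ} (hx : 0 ≤ x) (hxy : x ≤ y) :
    x / (1 + x) ≤ y / (1 + y) := by
  rw [div_le_div_iff₀ (by linarith) (by linarith)]
  nlinarith

private lemma key {N K : ℕ} (c : ℝ) (hc : 0 ≤ c)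
    (a a' : Fin N → Fin K → ℝ) (m m' : ℝ)
    (hnn : ∀ n k, 0 ≤ a' n k * m')
    (hle : ∀ n k, a' n k * m' ≤ a n k * m)
    (hmm : m' < m)
    (h1 : 1 = c * ∑ n, ∑ k, a n k * m / (1 + a n k * m) + m)
    (h2 : 1 = c * ∑ n, ∑ k, a' n k * m' / (1 + a' n k * m') + m') :
    False := by
  have hsum : ∑ n, ∑ k, a' n k * m' / (1 + a' n k * m')
      ≤ ∑ n, ∑ k, a n k * m / (1 + a n k * m) := by
    refine Finset.sum_le_sum fun n _ => Finset.sum_le_sum fun k _ => ?_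
    exact p_mono (hnn n k) (hle n k)
  nlinarith [mul_le_mul_of_nonneg_left hsum hc]

private lemma eq_form {N K : ℕ} (c : ℝ) (a : Fin N → Fin K → ℝ) (m : ℝ) (hm : 0 < m)
    (he : 1 / m = c * ∑ n, ∑ k, a n k / (1 + a n k * m) + 1) :
    1 = c * ∑ n, ∑ k, a n k * m / (1 + a n k * m) + m := by
  have h := congrArg (· * m) he
  simp only [one_div, inv_mul_cancel₀ hm.ne'] at h
  have hs : (∑ n, ∑ k, a n k / (1 + a n k * m)) * m
      = ∑ n, ∑ k, a n k * m / (1 + a n k * m) := by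
    rw [Finset.sum_mul]
    refine Finset.sum_congr rfl fun n _ => ?_
    rw [Finset.sum_mul]
    refine Finset.sum_congr rfl fun k _ => ?_
    rw [div_mul_eq_mul_div]
  rw [add_mul, one_mul, mul_assoc, hs] at h
  exact h

/-- The ROBF map is a standard function on the nonnegative orthant:
positivity, monotonicity and (strict) scalability. -/
theorem robf_map_is_standard
    (N K Nt : ℕ)
    (σ : Fin N → Fin N → Fin K → ℝ) (hσ : ∀ i n k, 0 < σ i n k)
    (γ : Fin N → Fin K → ℝ) (hγ : ∀ i j, 0 < γ i j)
    (mbar : (Fin N → Fin K → ℝ) → Fin N → ℝ)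
    (hmbar : ∀ μ : Fin N → Fin K → ℝ, (∀ n k, 0 ≤ μ n k) → ∀ i : Fin N,
      0 < mbar μ i ∧
      1 / mbar μ i =
        (1 / (Nt : ℝ)) * ∑ n, ∑ k, σ i n k * μ n k / (1 + σ i n k * μ n k * mbar μ i) + 1)
    (F : (Fin N → Fin K → ℝ) → Fin N → Fin K → ℝ)
    (hF : ∀ μ i j, F μ i j = γ i j / (σ i i j * mbar μ i)) :
    (∀ μ : Fin N → Fin K → ℝ, (∀ n k, 0 ≤ μ n k) → ∀ i j, 0 < F μ i j) ∧
    (∀ μ μ' : Fin N → Fin K → ℝ, (∀ n k, 0 ≤ μ n k) → (∀ n k, μ n k ≤ μ' n k) →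
      ∀ i j, F μ i j ≤ F μ' i j) ∧
    (∀ β : ℝ, 1 < β → ∀ μ : Fin N → Fin K → ℝ, (∀ n k, 0 ≤ μ n k) →
      ∀ i j, F (fun n k => β * μ n k) i j < β * F μ i j) := by
  have hc : (0:ℝ) ≤ 1 / (Nt : ℝ) := by positivity
  refine ⟨?_, ?_, ?_⟩
  · intro μ hμ i j
    rw [hF]
    exact div_pos (hγ i j) (mul_pos (hσ i i j) (hmbar μ hμ i).1)
  · intro μ μ' hμ hle i j
    have hμ' : ∀ n k, 0 ≤ μ' n k := fun n k => (hμ n k).trans (hle n k)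
    obtain ⟨hm, he⟩ := hmbar μ hμ i
    obtain ⟨hm', he'⟩ := hmbar μ' hμ' i
    have h1 := eq_form _ _ _ hm he
    have h2 := eq_form _ _ _ hm' he'
    have hmono : mbar μ' i ≤ mbar μ i := by
      by_contra hcon
      push_neg at hcon
      refine key _ hc (fun n k => σ i n k * μ' n k) (fun n k => σ i n k * μ n k)
        (mbar μ' i) (mbar μ i)
        (fun n k => mul_nonneg (mul_nonneg (hσ i n k).le (hμ n k)) hm.le)
        (fun n k => ?_) hcon h2 h1
      exact mul_le_mul (mul_le_mul_of_nonneg_left (hle n k) (hσ i n k).le)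
        hcon.le hm.le (mul_nonneg (hσ i n k).le (hμ' n k))
    rw [hF, hF]
    gcongr
    · exact (hγ i j).le
    · exact mul_pos (hσ i i j) hm'
    · exact (hσ i i j).le
  · intro β hβ μ hμ i j
    have hβμ : ∀ n k, 0 ≤ β * μ n k := fun n k => by
      have := hμ n k; nlinarith
    obtain ⟨hm, he⟩ := hmbar μ hμ i
    obtain ⟨hm', he'⟩ := hmbar (fun n k => β * μ n k) hβμ i
    have h1 := eq_form _ _ _ hm he
    have h2 := eq_form _ _ _ hm' he'
    set m := mbar μ i
    set m' := mbar (fun n k => β * μ n k) i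
    have hscale : m / β < m' := by
      by_contra hcon
      push_neg at hcon
      have hm'm : m' < m := by
        calc m' ≤ m / β := hcon
        _ < m := by rw [div_lt_iff₀ (by linarith)]; nlinarith
      refine key _ hc (fun n k => σ i n k * μ n k)
        (fun n k => σ i n k * (β * μ n k)) m m'
        (fun n k => mul_nonneg (mul_nonneg (hσ i n k).le (hβμ n k)) hm'.le)
        (fun n k => ?_) hm'm h1 h2
      have h1' : σ i n k * (β * μ n k) * m' = σ i n k * μ n k * (β * m') := by ring
      have h2' : β * m' ≤ m := by
        have hb : (0:ℝ) < β := by linarith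
        have := (le_div_iff₀ hb).mp hcon
        linarith
      rw [h1']
      exact mul_le_mul_of_nonneg_left h2' (mul_nonneg (hσ i n k).le (hμ n k))
    rw [hF, hF]
    have hd : σ i i j * m' > σ i i j * (m / β) := by
      exact mul_lt_mul_of_pos_left hscale (hσ i i j)
    have hpos : 0 < σ i i j * (m / β) := mul_pos (hσ i i j) (div_pos hm (by linarith))
    calc γ i j / (σ i i j * m') < γ i j / (σ i i j * (m / β)) :=
          div_lt_div_of_pos_left (hγ i j) hpos hd
    _ = β * (γ i j / (σ i i j * m)) := by
          field_simp
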